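/- Let R, P, Q be real M×M matrices with P and Q symmetric positive definite and P·R + Rᵀ·P = Q. Then every complex eigenvalue of R (root of its characteristic polynomial over ℂ) has strictly positive real part. -/

import Mathlib

open Matrix

private lemma re_dot_pos (M : ℕ) (S : Matrix (Fin M) (Fin M) ℝ) (hS : S.PosDef)
    (v : Fin M → ℂ) (hv : v ≠ 0) :
    0 < ((star v) ⬝ᵥ ((S.map (algebraMap ℝ ℂ)) *ᵥ v)).re := by
  set a : Fin M → ℝ := fun i => (v i).re with ha
  set b : Fin M → ℝ := fun i => (v i).im with hb
  have key : ((star v) ⬝ᵥ ((S.map (algebraMap ℝ ℂ)) *ᵥ v)).re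
      = a ⬝ᵥ (S *ᵥ a) + b ⬝ᵥ (S *ᵥ b) := by
    simp only [dotProduct, mulVec, Matrix.map_apply, Pi.star_apply, Complex.re_sum,
      Finset.mul_sum, Complex.mul_re, Complex.mul_im, Complex.ofReal_re, Complex.ofReal_im,
      RCLike.star_def, Complex.conj_re, Complex.conj_im, Complex.coe_algebraMap]
    rw [← Finset.sum_add_distrib]
    refine Finset.sum_congr rfl fun i _ => ?_
    rw [← Finset.sum_add_distrib]
    refine Finset.sum_congr rfl fun j _ => ?_
    ring
  rw [key]
  have hab : a ≠ 0 ∨ b ≠ 0 := by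
    by_contra h
    push_neg at h
    exact hv (funext fun i => Complex.ext (congrFun h.1 i) (congrFun h.2 i))
  have hpa : 0 ≤ a ⬝ᵥ (S *ᵥ a) := by simpa using hS.posSemidef.dotProduct_mulVec_nonneg a
  have hpb : 0 ≤ b ⬝ᵥ (S *ᵥ b) := by simpa using hS.posSemidef.dotProduct_mulVec_nonneg b
  rcases hab with h | h
  · have := hS.dotProduct_mulVec_pos h
    simp only [star_trivial] at this
    linarith
  · have := hS.dotProduct_mulVec_pos h
    simp only [star_trivial] at this
    linarith

/-- Converse Lyapunov implication: if `P, Q` are symmetric positive definite and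
`P * R + Rᵀ * P = Q`, then all complex eigenvalues of `R` have positive real part. -/
theorem stmt_1 (M : ℕ) (R P Q : Matrix (Fin M) (Fin M) ℝ)
    (hP : P.PosDef) (hQ : Q.PosDef) (hLyap : P * R + Rᵀ * P = Q) :
    ∀ μ : ℂ, ((R.map (algebraMap ℝ ℂ)).charpoly).IsRoot μ → 0 < μ.re := by
  intro μ hroot
  set f := algebraMap ℝ ℂ
  set Rc := R.map f with hRc
  set Pc := P.map f with hPc
  set Qc := Q.map f with hQc
  -- eigenvector
  have hdet : (Matrix.scalar (Fin M) μ - Rc).det = 0 := by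
    have := hroot
    rw [Polynomial.IsRoot, Matrix.charpoly, eval_det, matPolyEquiv_charmatrix] at this
    simpa using this
  obtain ⟨v, hv, hveq⟩ := (Matrix.exists_mulVec_eq_zero_iff).2 hdet
  rw [sub_mulVec] at hveq
  have h2 : (Matrix.scalar (Fin M) μ) *ᵥ v = μ • v := by
    ext i; simp [Matrix.scalar, mulVec_diagonal]
  rw [h2] at hveq
  have heig : Rc *ᵥ v = μ • v := (sub_eq_zero.mp hveq).symm
  -- Lyapunov equation over ℂ
  have hLc : Pc * Rc + Rcᵀ * Pc = Qc := by
    rw [hPc, hRc, hQc, ← Matrix.map_mul, ← Matrix.transpose_map, ← Matrix.map_mul,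
      ← Matrix.map_add f (fun a b => map_add f a b), hLyap]
  -- conjugated eigen equation
  have hstar : Rc *ᵥ (star v) = (starRingEnd ℂ μ) • star v := by
    funext i
    have := congrFun heig i
    simp only [mulVec, dotProduct, Pi.smul_apply, smul_eq_mul] at this ⊢
    calc ∑ j, Rc i j * star v j = starRingEnd ℂ (∑ j, Rc i j * v j) := by
          rw [map_sum]
          refine Finset.sum_congr rfl fun j _ => ?_
          simp [hRc, Matrix.map_apply, f, Pi.star_apply, RCLike.star_def, mul_comm]
      _ = starRingEnd ℂ (μ * v i) := by rw [this]
      _ = starRingEnd ℂ μ * star (v i) := by simp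
  -- key identity
  have hq : (star v) ⬝ᵥ (Qc *ᵥ v) = (μ + starRingEnd ℂ μ) * ((star v) ⬝ᵥ (Pc *ᵥ v)) := by
    rw [← hLc, add_mulVec, dotProduct_add, ← mulVec_mulVec, heig, mulVec_smul,
      dotProduct_smul, ← mulVec_mulVec, dotProduct_mulVec (star v) Rcᵀ,
      vecMul_transpose, hstar, smul_dotProduct]
    simp only [smul_eq_mul]; ring
  have hqre : ((star v) ⬝ᵥ (Qc *ᵥ v)).re = (2 * μ.re) * ((star v) ⬝ᵥ (Pc *ᵥ v)).re := by
    rw [hq]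
    have : μ + starRingEnd ℂ μ = ((2 * μ.re : ℝ) : ℂ) := by
      rw [Complex.add_conj]
    rw [this, Complex.re_ofReal_mul]
  have hqp := re_dot_pos M Q hQ v hv
  have hpp := re_dot_pos M P hP v hv
  rw [← hQc] at hqp
  rw [← hPc] at hpp
  rw [hqre] at hqp
  nlinarith
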